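/- Let $k$ be a field and let $D$ and $D'$ be associative unital $k$-algebras equipped with increasing exhaustive filtrations $(\mathrm{Fil}_\alpha D)_{\alpha\in\mathbb{Z}}$ and $(\mathrm{Fil}_\alpha D')_{\alpha\in\mathbb{Z}}$ by $k$-subspaces satisfying $\mathrm{Fil}_\alpha = 0$ for $\alpha < 0$, $1 \in \mathrm{Fil}_0$, and $\mathrm{Fil}_\alpha \cdot \mathrm{Fil}_\beta \subseteq \mathrm{Fil}_{\alpha+\beta}$, and such that $D_0 := \mathrm{Fil}_0 D$ and $D'_0 := \mathrm{Fil}_0 D'$ are commutative subrings. Let $f : D \to D'$ be a $k$-algebra homomorphism with $f(\mathrm{Fil}_\alpha D) \subseteq \mathrm{Fil}_\alpha D'$ for all $\alpha$ (so $f$ restricts to a ring homomorphism $D_0 \to D'_0$, making $D'_0$ a commutative $D_0$-algebra). Assume that $D'_0$ is flat as a $D_0$-module and that for every $\alpha \geq 0$ the natural $D'_0$-linear map $D'_0 \otimes_{D_0} (\mathrm{Fil}_\alpha D / \mathrm{Fil}_{\alpha-1} D) \to \mathrm{Fil}_\alpha D' / \mathrm{Fil}_{\alpha-1} D'$ induced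 by $f$ is bijective. Then for every $\alpha \in \mathbb{Z}$ the natural map of left $D'_0$-modules $D'_0 \otimes_{D_0} \mathrm{Fil}_\alpha D \to \mathrm{Fil}_\alpha D'$, $d' \otimes x \mapsto d' \cdot f(x)$, is bijective; consequently the natural map $D'_0 \otimes_{D_0} D \to D'$, $d' \otimes x \mapsto d' \cdot f(x)$, is an isomorphism of left $D'_0$-modules. -/

import Mathlib

open TensorProduct

section BaseChangeMaps

variable {k : Type*} [Field k]
variable {D₀ : Type*} [CommRing D₀] [Algebra k D₀]
variable {D : Type*} [Ring D] [Algebra k D]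
variable {D'₀ : Type*} [CommRing D'₀] [Algebra k D'₀] [Algebra D₀ D'₀]
variable {D' : Type*} [Ring D'] [Algebra k D']
variable [Module D₀ D] [Module D'₀ D'] [Module D₀ D'] [IsScalarTower D₀ D'₀ D']

/-- A filtered `k`-algebra map `f : D → D'`, viewed as a `D₀`-linear map, where the
`D₀`-module structures on `D` (via `ι` and left multiplication) and on `D'` (via the
restriction `D₀ → D'₀` of `f` and left multiplication) are pinned by `hsmul`, `hsmul'`,
`hcompat`. -/
noncomputable def fLinear
    (ι : D₀ →ₐ[k] D) (ι' : D'₀ →ₐ[k] D')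
    (hsmul : ∀ (a : D₀) (x : D), a • x = ι a * x)
    (hsmul' : ∀ (a : D'₀) (y : D'), a • y = ι' a * y)
    (f : D →ₐ[k] D')
    (hcompat : ∀ a : D₀, f (ι a) = ι' (algebraMap D₀ D'₀ a)) :
    D →ₗ[D₀] D' where
  toFun := f
  map_add' := map_add f
  map_smul' a x := by
    simp only [RingHom.id_apply]
    rw [hsmul, map_mul, hcompat, ← hsmul', algebraMap_smul]

/-- The restriction of `f` to a `D₀`-linear map `Fil α → Fil' α`. -/
noncomputable def resMap
    (ι : D₀ →ₐ[k] D) (ι' : D'₀ →ₐ[k] D')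
    (hsmul : ∀ (a : D₀) (x : D), a • x = ι a * x)
    (hsmul' : ∀ (a : D'₀) (y : D'), a • y = ι' a * y)
    (f : D →ₐ[k] D')
    (hcompat : ∀ a : D₀, f (ι a) = ι' (algebraMap D₀ D'₀ a))
    (Fil : ℤ → Submodule D₀ D) (Fil' : ℤ → Submodule D'₀ D')
    (hffil : ∀ α : ℤ, ∀ x ∈ Fil α, f x ∈ Fil' α) (α : ℤ) :
    (Fil α) →ₗ[D₀] (Fil' α) where
  toFun x := ⟨f x, hffil α x x.2⟩
  map_add' x y := by ext; simp
  map_smul' a x := by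
    apply Subtype.ext
    have h1 : f ((a • x : Fil α) : D) = a • f (x : D) := by
      rw [Submodule.coe_smul, hsmul, map_mul, hcompat, ← hsmul', algebraMap_smul]
    simpa using h1

/-- The natural `D'₀`-linear base-change map `D'₀ ⊗[D₀] Fil α → Fil' α`,
`d' ⊗ x ↦ d' • f x`. -/
noncomputable def filBaseChange
    (ι : D₀ →ₐ[k] D) (ι' : D'₀ →ₐ[k] D')
    (hsmul : ∀ (a : D₀) (x : D), a • x = ι a * x)
    (hsmul' : ∀ (a : D'₀) (y : D'), a • y = ι' a * y)
    (f : D →ₐ[k] D')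
    (hcompat : ∀ a : D₀, f (ι a) = ι' (algebraMap D₀ D'₀ a))
    (Fil : ℤ → Submodule D₀ D) (Fil' : ℤ → Submodule D'₀ D')
    (hffil : ∀ α : ℤ, ∀ x ∈ Fil α, f x ∈ Fil' α) (α : ℤ) :
    D'₀ ⊗[D₀] (Fil α) →ₗ[D'₀] (Fil' α) :=
  LinearMap.liftBaseChange D'₀ (resMap ι ι' hsmul hsmul' f hcompat Fil Fil' hffil α)

/-- The natural `D'₀`-linear base-change map `D'₀ ⊗[D₀] D → D'`, `d' ⊗ x ↦ d' • f x`. -/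
noncomputable def fullBaseChange
    (ι : D₀ →ₐ[k] D) (ι' : D'₀ →ₐ[k] D')
    (hsmul : ∀ (a : D₀) (x : D), a • x = ι a * x)
    (hsmul' : ∀ (a : D'₀) (y : D'), a • y = ι' a * y)
    (f : D →ₐ[k] D')
    (hcompat : ∀ a : D₀, f (ι a) = ι' (algebraMap D₀ D'₀ a)) :
    D'₀ ⊗[D₀] D →ₗ[D'₀] D' :=
  LinearMap.liftBaseChange D'₀ (fLinear ι ι' hsmul hsmul' f hcompat)

/-- The map induced by `f` on the graded piece `Fil α / Fil (α - 1)`, as a `D₀`-linear map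
into `Fil' α / Fil' (α - 1)`. -/
noncomputable def gradedPieceMap
    (ι : D₀ →ₐ[k] D) (ι' : D'₀ →ₐ[k] D')
    (hsmul : ∀ (a : D₀) (x : D), a • x = ι a * x)
    (hsmul' : ∀ (a : D'₀) (y : D'), a • y = ι' a * y)
    (f : D →ₐ[k] D')
    (hcompat : ∀ a : D₀, f (ι a) = ι' (algebraMap D₀ D'₀ a))
    (Fil : ℤ → Submodule D₀ D) (Fil' : ℤ → Submodule D'₀ D')
    (hffil : ∀ α : ℤ, ∀ x ∈ Fil α, f x ∈ Fil' α) (α : ℤ) :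
    ((Fil α) ⧸ ((Fil (α - 1)).comap (Fil α).subtype)) →ₗ[D₀]
      ((Fil' α) ⧸ ((Fil' (α - 1)).comap (Fil' α).subtype)) :=
  (Submodule.Quotient.restrictScalarsEquiv D₀
      ((Fil' (α - 1)).comap (Fil' α).subtype)).toLinearMap.comp
    (Submodule.mapQ ((Fil (α - 1)).comap (Fil α).subtype)
      (((Fil' (α - 1)).comap (Fil' α).subtype).restrictScalars D₀)
      (resMap ι ι' hsmul hsmul' f hcompat Fil Fil' hffil α)
      (fun _ hx => hffil (α - 1) _ hx))

/-- The natural `D'₀`-linear base-change map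
`D'₀ ⊗[D₀] (Fil α / Fil (α-1)) → Fil' α / Fil' (α-1)` induced by `f`. -/
noncomputable def gradedBaseChange
    (ι : D₀ →ₐ[k] D) (ι' : D'₀ →ₐ[k] D')
    (hsmul : ∀ (a : D₀) (x : D), a • x = ι a * x)
    (hsmul' : ∀ (a : D'₀) (y : D'), a • y = ι' a * y)
    (f : D →ₐ[k] D')
    (hcompat : ∀ a : D₀, f (ι a) = ι' (algebraMap D₀ D'₀ a))
    (Fil : ℤ → Submodule D₀ D) (Fil' : ℤ → Submodule D'₀ D')
    (hffil : ∀ α : ℤ, ∀ x ∈ Fil α, f x ∈ Fil' α) (α : ℤ) :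
    D'₀ ⊗[D₀] ((Fil α) ⧸ ((Fil (α - 1)).comap (Fil α).subtype)) →ₗ[D'₀]
      ((Fil' α) ⧸ ((Fil' (α - 1)).comap (Fil' α).subtype)) :=
  LinearMap.liftBaseChange D'₀
    (gradedPieceMap ι ι' hsmul hsmul' f hcompat Fil Fil' hffil α)

end BaseChangeMaps

set_option maxHeartbeats 1600000 in
/-- **Base change of filtered rings (Lemma on characteristic cycles, §1.1).**
Let `D`, `D'` be filtered `k`-algebras whose filtrations are exhaustive, increasing,
vanish in negative degrees, contain `1` in degree `0`, and are multiplicative, with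
`D₀ = Fil₀ D` and `D'₀ = Fil₀ D'` commutative.  Let `f : D → D'` be a filtered `k`-algebra
homomorphism restricting to `D₀ → D'₀`.  If `D'₀` is flat over `D₀` and the natural maps
`D'₀ ⊗[D₀] (Fil_α D / Fil_{α-1} D) → Fil_α D' / Fil_{α-1} D'` are bijective for all
`α ≥ 0`, then the natural maps `D'₀ ⊗[D₀] Fil_α D → Fil_α D'` are bijective for all `α`,
and consequently `D'₀ ⊗[D₀] D → D'`, `d' ⊗ x ↦ d' ⬝ f x`, is an isomorphism of left
`D'₀`-modules. -/
theorem stmt_0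
    (k : Type*) [Field k]
    (D₀ : Type*) [CommRing D₀] [Algebra k D₀]
    (D : Type*) [Ring D] [Algebra k D]
    (D'₀ : Type*) [CommRing D'₀] [Algebra k D'₀] [Algebra D₀ D'₀]
    (D' : Type*) [Ring D'] [Algebra k D']
    [Module D₀ D] [Module D'₀ D'] [Module D₀ D'] [IsScalarTower D₀ D'₀ D']
    -- `D₀` is the degree-`0` part of `D`, acting by left multiplication:
    (ι : D₀ →ₐ[k] D) (hι : Function.Injective ι)
    (hsmul : ∀ (a : D₀) (x : D), a • x = ι a * x)
    -- `D'₀` is the degree-`0` part of `D'`, acting by left multiplication: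
    (ι' : D'₀ →ₐ[k] D') (hι' : Function.Injective ι')
    (hsmul' : ∀ (a : D'₀) (y : D'), a • y = ι' a * y)
    -- the filtrations:
    (Fil : ℤ → Submodule D₀ D) (Fil' : ℤ → Submodule D'₀ D')
    (hrange : (Fil 0 : Set D) = Set.range ι)
    (hrange' : (Fil' 0 : Set D') = Set.range ι')
    (hmono : Monotone Fil) (hmono' : Monotone Fil')
    (hneg : ∀ α : ℤ, α < 0 → Fil α = ⊥) (hneg' : ∀ α : ℤ, α < 0 → Fil' α = ⊥)
    (hexh : ∀ x : D, ∃ α : ℤ, x ∈ Fil α) (hexh' : ∀ y : D', ∃ α : ℤ, y ∈ Fil' α)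
    (hone : (1 : D) ∈ Fil 0) (hone' : (1 : D') ∈ Fil' 0)
    (hmul : ∀ (α β : ℤ) (x y : D), x ∈ Fil α → y ∈ Fil β → x * y ∈ Fil (α + β))
    (hmul' : ∀ (α β : ℤ) (x y : D'), x ∈ Fil' α → y ∈ Fil' β → x * y ∈ Fil' (α + β))
    -- the filtered homomorphism `f`, restricting on degree-`0` parts to `D₀ → D'₀`:
    (f : D →ₐ[k] D')
    (hcompat : ∀ a : D₀, f (ι a) = ι' (algebraMap D₀ D'₀ a))
    (hffil : ∀ α : ℤ, ∀ x ∈ Fil α, f x ∈ Fil' α)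
    -- flatness of `D'₀` over `D₀`:
    (hflat : Module.Flat D₀ D'₀)
    -- bijectivity of base change on graded pieces in non-negative degrees:
    (hgr : ∀ α : ℤ, 0 ≤ α →
      Function.Bijective (gradedBaseChange ι ι' hsmul hsmul' f hcompat Fil Fil' hffil α)) :
    (∀ α : ℤ,
        Function.Bijective (filBaseChange ι ι' hsmul hsmul' f hcompat Fil Fil' hffil α)) ∧
      Function.Bijective (fullBaseChange ι ι' hsmul hsmul' f hcompat) := by

  classical
  set B := filBaseChange ι ι' hsmul hsmul' f hcompat Fil Fil' hffil with hBdef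
  -- coercion formula for B on pure tensors
  have Bapp : ∀ (α : ℤ) (d' : D'₀) (x : Fil α), ((B α (d' ⊗ₜ x) : Fil' α) : D') = d' • f x := by
    intro α d' x
    rfl
  -- negative degrees
  have hnegbij : ∀ α : ℤ, α < 0 → Function.Bijective (B α) := by
    intro α hα
    have h1 : Subsingleton (Fil α) := by rw [hneg α hα]; infer_instance
    have h2 : Subsingleton (Fil' α) := by rw [hneg' α hα]; infer_instance
    have h3 : ∀ t : D'₀ ⊗[D₀] (Fil α), t = 0 := by
      intro t
      induction t using TensorProduct.induction_on with
      | zero => rfl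
      | tmul d' x =>
        rw [Subsingleton.elim x 0, TensorProduct.tmul_zero]
      | add a b ha hb => rw [ha, hb, add_zero]
    constructor
    · intro a b _
      rw [h3 a, h3 b]
    · intro y
      exact ⟨0, Subsingleton.elim _ _⟩
  -- the inductive step
  have step : ∀ α : ℤ, 0 ≤ α → Function.Bijective (B (α - 1)) → Function.Bijective (B α) := by
    intro α hα IH
    have hle : Fil (α - 1) ≤ Fil α := hmono (by omega)
    have hle' : Fil' (α - 1) ≤ Fil' α := hmono' (by omega)
    set incl : (Fil (α - 1)) →ₗ[D₀] (Fil α) := Submodule.inclusion hle with hincl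
    set incl' : (Fil' (α - 1)) →ₗ[D'₀] (Fil' α) := Submodule.inclusion hle' with hincl'
    set q : (Fil α) →ₗ[D₀] _ := ((Fil (α - 1)).comap (Fil α).subtype).mkQ with hq
    set q' : (Fil' α) →ₗ[D'₀] _ := ((Fil' (α - 1)).comap (Fil' α).subtype).mkQ with hq'
    set G := gradedBaseChange ι ι' hsmul hsmul' f hcompat Fil Fil' hffil α with hGdef
    have hG := hgr α hα
    -- exactness of incl, q
    have hexact0 : Function.Exact incl q := by
      rw [LinearMap.exact_iff]
      rw [Submodule.ker_mkQ, Submodule.range_inclusion]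
    have hexact : Function.Exact (LinearMap.lTensor D'₀ incl) (LinearMap.lTensor D'₀ q) :=
      lTensor_exact D'₀ hexact0 (Submodule.mkQ_surjective _)
    -- first commuting square
    have comm1 : ∀ t, B α (LinearMap.lTensor D'₀ incl t) = incl' (B (α - 1) t) := by
      intro t
      induction t using TensorProduct.induction_on with
      | zero => simp
      | tmul d' x =>
        apply Subtype.ext
        rw [LinearMap.lTensor_tmul, Bapp, Submodule.coe_inclusion,
          Submodule.coe_inclusion, Bapp]
      | add a b ha hb => simp only [map_add, ha, hb]
    -- second commuting square
    have comm2 : ∀ t, G (LinearMap.lTensor D'₀ q t) = q' (B α t) := by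
      intro t
      induction t using TensorProduct.induction_on with
      | zero => simp
      | tmul d' x =>
        rw [LinearMap.lTensor_tmul]
        show (gradedPieceMap ι ι' hsmul hsmul' f hcompat Fil Fil' hffil α).liftBaseChange D'₀
            (d' ⊗ₜ q x) = q' (B α (d' ⊗ₜ x))
        rw [LinearMap.liftBaseChange_tmul]
        have h1 : B α (d' ⊗ₜ x) = d' • (⟨f x, hffil α x x.2⟩ : Fil' α) := rfl
        rw [h1, map_smul]
        rfl
      | add a b ha hb => simp only [map_add, ha, hb]
    constructor
    · -- injectivity
      rw [← LinearMap.ker_eq_bot, Submodule.eq_bot_iff]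
      intro t ht
      rw [LinearMap.mem_ker] at ht
      have h1 : LinearMap.lTensor D'₀ q t = 0 := by
        apply hG.injective
        rw [comm2, ht, map_zero, map_zero]
      obtain ⟨s, hs⟩ := (hexact t).mp h1
      have h2 : B (α - 1) s = 0 := by
        apply Submodule.inclusion_injective hle'
        rw [← comm1, hs, ht, map_zero]
      have h3 : s = 0 := by
        apply IH.injective
        rw [h2, map_zero]
      rw [← hs, h3, map_zero]
    · -- surjectivity
      intro y
      obtain ⟨u, hu⟩ := hG.surjective (q' y)
      obtain ⟨t, ht⟩ := LinearMap.lTensor_surjective D'₀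
        (Submodule.mkQ_surjective ((Fil (α - 1)).comap (Fil α).subtype)) u
      have h1 : q' (y - B α t) = 0 := by
        rw [map_sub, ← comm2, ht, hu, sub_self]
      have h2 : ((y - B α t : Fil' α) : D') ∈ Fil' (α - 1) := by
        have := h1
        rw [hq', Submodule.mkQ_apply] at this
        rwa [Submodule.Quotient.mk_eq_zero] at this
      obtain ⟨s, hs⟩ := IH.surjective ⟨((y - B α t : Fil' α) : D'), h2⟩
      refine ⟨t + LinearMap.lTensor D'₀ incl s, ?_⟩
      rw [map_add, comm1, hs]
      apply Subtype.ext
      rw [Submodule.coe_add, Submodule.coe_inclusion]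
      show ((B α t : Fil' α) : D') + (((y - B α t : Fil' α) : D')) = y
      rw [Submodule.coe_sub]
      abel
  -- all degrees
  have key : ∀ α : ℤ, Function.Bijective (B α) := by
    intro α
    rcases lt_or_ge α 0 with h | h
    · exact hnegbij α h
    · refine Int.le_induction (motive := fun β _ => Function.Bijective (B β)) ?_ ?_ α h
      · exact step 0 le_rfl (hnegbij (0 - 1) (by norm_num))
      · intro n hn ih
        have h2 : Function.Bijective (B ((n + 1) - 1)) := by
          rw [show (n : ℤ) + 1 - 1 = n by ring]
          exact ih
        exact step (n + 1) (by omega) h2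
  refine ⟨key, ?_⟩
  set F := fullBaseChange ι ι' hsmul hsmul' f hcompat with hFdef
  have comm3 : ∀ (α : ℤ) (t : D'₀ ⊗[D₀] (Fil α)),
      F (LinearMap.lTensor D'₀ (Fil α).subtype t) = ((B α t : Fil' α) : D') := by
    intro α t
    induction t using TensorProduct.induction_on with
    | zero => simp
    | tmul d' x => rw [LinearMap.lTensor_tmul, Bapp]; rfl
    | add a b ha hb => rw [map_add, map_add, ha, hb, map_add, Submodule.coe_add]
  have lifting : ∀ t : D'₀ ⊗[D₀] D, ∃ (α : ℤ) (s : D'₀ ⊗[D₀] (Fil α)),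
      LinearMap.lTensor D'₀ (Fil α).subtype s = t := by
    intro t
    induction t using TensorProduct.induction_on with
    | zero => exact ⟨0, 0, by simp⟩
    | tmul d' x =>
      obtain ⟨α, hx⟩ := hexh x
      exact ⟨α, d' ⊗ₜ ⟨x, hx⟩, rfl⟩
    | add a b ha hb =>
      obtain ⟨α₁, s₁, h₁⟩ := ha
      obtain ⟨α₂, s₂, h₂⟩ := hb
      refine ⟨max α₁ α₂,
        LinearMap.lTensor D'₀ (Submodule.inclusion (hmono (le_max_left α₁ α₂))) s₁ +
        LinearMap.lTensor D'₀ (Submodule.inclusion (hmono (le_max_right α₁ α₂))) s₂, ?_⟩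
      rw [map_add, ← LinearMap.lTensor_comp_apply, ← LinearMap.lTensor_comp_apply,
        Submodule.subtype_comp_inclusion, Submodule.subtype_comp_inclusion, h₁, h₂]
  constructor
  · rw [← LinearMap.ker_eq_bot, Submodule.eq_bot_iff]
    intro t ht
    rw [LinearMap.mem_ker] at ht
    obtain ⟨α, s, hs⟩ := lifting t
    have h1 : B α s = 0 := by
      apply Subtype.ext
      rw [← comm3, hs, ht]
      rfl
    have h2 : s = 0 := by
      apply (key α).injective
      rw [h1, map_zero]
    rw [← hs, h2, map_zero]
  · intro y
    obtain ⟨α, hy⟩ := hexh' y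
    obtain ⟨s, hs⟩ := (key α).surjective ⟨y, hy⟩
    exact ⟨LinearMap.lTensor D'₀ (Fil α).subtype s, by rw [comm3, hs]⟩
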